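/- Let p be a prime with p ∉ {2, 3, 5}. Then 8 divides the number of points of the reduction of E₂ modulo p, i.e. 8 ∣ #E₂(𝔽_p). -/

import Mathlib

/-- The reduction modulo `p` of the elliptic curve
`E₂ : y² + xy + y = x³ + x² − 5x + 2` (Cremona label 15A3), i.e. the Weierstrass
curve over `𝔽_p = ZMod p` with coefficients `a₁ = 1`, `a₂ = 1`, `a₃ = 1`, `a₄ = −5`,
`a₆ = 2`. -/
def E₂mod (p : ℕ) : WeierstrassCurve.Affine (ZMod p) :=
  { a₁ := 1, a₂ := 1, a₃ := 1, a₄ := -5, a₆ := 2 }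

open WeierstrassCurve.Affine WeierstrassCurve.Affine.Point

lemma some_eq_some' {F : Type*} [Field F] {W : WeierstrassCurve.Affine F}
    {x1 y1 x2 y2 : F} (h1 : W.Nonsingular x1 y1) (h2 : W.Nonsingular x2 y2)
    (hx : x1 = x2) (hy : y1 = y2) : Point.some _ _ h1 = Point.some _ _ h2 := by
  subst hx; subst hy; rfl

lemma key_lemma {G : Type*} [AddCommGroup G] (a b : G) (ha : 4 • a = 0) (hb : 2 • b = 0)
    (h2a : 2 • a ≠ 0) (hb0 : b ≠ 0) (hab : a ≠ b) (h2ab : 2 • a + b ≠ 0) :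
    8 ∣ Nat.card G := by
  have ha' : zmultiplesHom G a (4 : ℤ) = 0 := by
    show (4 : ℤ) • a = 0
    rw [show ((4:ℤ)) = ((4:ℕ):ℤ) by norm_num, natCast_zsmul]; exact ha
  have hb' : zmultiplesHom G b (2 : ℤ) = 0 := by
    show (2 : ℤ) • b = 0
    rw [show ((2:ℤ)) = ((2:ℕ):ℤ) by norm_num, natCast_zsmul]; exact hb
  set fa : ZMod 4 →+ G := ZMod.lift 4 ⟨zmultiplesHom G a, ha'⟩ with hfa
  set fb : ZMod 2 →+ G := ZMod.lift 2 ⟨zmultiplesHom G b, hb'⟩ with hfb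
  set f : ZMod 4 × ZMod 2 →+ G :=
    fa.comp (AddMonoidHom.fst _ _) + fb.comp (AddMonoidHom.snd _ _) with hf
  have fa1 : fa 1 = a := by
    have : ((1 : ℤ) : ZMod 4) = 1 := by norm_cast
    rw [hfa, ← this, ZMod.lift_coe]; simp
  have fa2 : fa 2 = 2 • a := by
    rw [show (2 : ZMod 4) = 1 + 1 by decide, map_add, fa1, two_nsmul]
  have fa3 : fa 3 = 3 • a := by
    rw [show (3 : ZMod 4) = 1 + 1 + 1 by decide, map_add, map_add, fa1]
    abel
  have fb1 : fb 1 = b := by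
    have : ((1 : ℤ) : ZMod 2) = 1 := by norm_cast
    rw [hfb, ← this, ZMod.lift_coe]; simp
  have hinj : Function.Injective f := by
    rw [injective_iff_map_eq_zero]
    rintro ⟨m, n⟩ hx
    have hmn : f (m, n) = fa m + fb n := by simp [hf]
    have hnegb : -b = b := by
      rw [neg_eq_iff_add_eq_zero, ← two_nsmul]; exact hb
    rcases (show ∀ z : ZMod 4, z = 0 ∨ z = 1 ∨ z = 2 ∨ z = 3 by decide) m with
      rfl | rfl | rfl | rfl <;>
      rcases (show ∀ z : ZMod 2, z = 0 ∨ z = 1 by decide) n with rfl | rfl <;>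
      rw [hmn] at hx <;>
      simp only [fa1, fa2, fa3, fb1, _root_.map_zero, add_zero, zero_add] at hx
    · rfl
    · exact absurd hx hb0
    · -- a = 0
      exact absurd (by rw [two_nsmul, hx, add_zero]) h2a
    · -- a + b = 0 ⇒ a = -b = b
      exact absurd (by rw [← hnegb, eq_neg_iff_add_eq_zero]; exact hx) hab
    · exact absurd hx h2a
    · exact absurd hx h2ab
    · -- 3 • a = 0 ⇒ a = 4•a - 3•a = 0
      have : a = 0 := by
        have : a + 3 • a = 0 := by rw [← succ_nsmul']; exact ha
        rwa [hx, add_zero] at this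
      exact absurd (by rw [two_nsmul, this, add_zero]) h2a
    · -- 3 • a + b = 0 ⇒ b = -(3•a) = a
      have h3 : 3 • a = -b := by rw [← neg_eq_iff_add_eq_zero] at hx; rw [← hx, neg_neg]
      have : a = b := by
        have h4 : a + 3 • a = 0 := by rw [← succ_nsmul']; exact ha
        rw [h3, hnegb] at h4
        rw [← hnegb, eq_neg_iff_add_eq_zero]; exact h4
      exact absurd this hab
  have h8 : Nat.card (ZMod 4 × ZMod 2) = 8 := by
    simp [Nat.card_eq_fintype_card]
  exact h8 ▸ AddSubgroup.card_dvd_of_injective f hinj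

/-- For any prime `p ∉ {2, 3, 5}`, `8` divides the number of points of the reduction
of `E₂` modulo `p`. -/
theorem eight_dvd_card_E₂_mod_p (p : ℕ) (hp : p.Prime) (hp2 : p ≠ 2) (hp3 : p ≠ 3)
    (hp5 : p ≠ 5) : 8 ∣ Nat.card (E₂mod p).Point := by
  haveI : Fact p.Prime := ⟨hp⟩
  set W := E₂mod p with hW
  have hnz : ∀ n : ℕ, ¬ p ∣ n → (n : ZMod p) ≠ 0 := fun n hn h =>
    hn ((ZMod.natCast_eq_zero_iff n p).mp h)
  have h2 : (2 : ZMod p) ≠ 0 := by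
    have := hnz 2 (fun h => hp2 ((Nat.prime_dvd_prime_iff_eq hp Nat.prime_two).mp h))
    exact_mod_cast this
  have h3 : (3 : ZMod p) ≠ 0 := by
    have := hnz 3 (fun h => hp3 ((Nat.prime_dvd_prime_iff_eq hp Nat.prime_three).mp h))
    exact_mod_cast this
  have h5 : (5 : ZMod p) ≠ 0 := by
    have := hnz 5 (fun h => hp5 ((Nat.prime_dvd_prime_iff_eq hp (by norm_num)).mp h))
    exact_mod_cast this
  have h4 : (4 : ZMod p) ≠ 0 := by
    intro h; apply h2; have : (2 : ZMod p) * 2 = 0 := by linear_combination h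
    rcases mul_eq_zero.mp this with h' | h' <;> exact h'
  have h15 : (15 : ZMod p) ≠ 0 := by
    intro h; apply h3
    have : (3 : ZMod p) * 5 = 0 := by linear_combination h
    rcases mul_eq_zero.mp this with h' | h'
    · exact h'
    · exact absurd h' h5
  -- nonsingular points
  have hP : W.Nonsingular 0 1 := by
    rw [nonsingular_iff, equation_iff]
    refine ⟨by norm_num [hW, E₂mod], Or.inr ?_⟩
    norm_num [hW, E₂mod]
    intro h; apply h3; linear_combination h
  have hQ : W.Nonsingular 1 (-1) := by
    rw [nonsingular_iff, equation_iff]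
    refine ⟨by norm_num [hW, E₂mod], Or.inl ?_⟩
    norm_num [hW, E₂mod]
  have hT : W.Nonsingular (-3) 1 := by
    rw [nonsingular_iff, equation_iff]
    refine ⟨by norm_num [hW, E₂mod], Or.inl ?_⟩
    norm_num [hW, E₂mod]
    intro h; apply h15; linear_combination -h
  -- negY values
  have hnegP : W.negY 0 1 = -2 := by simp [negY, hW, E₂mod]; try ring
  have hnegQ : W.negY 1 (-1) = -1 := by simp [negY, hW, E₂mod]; try ring
  have hnegT : W.negY (-3) 1 = 1 := by simp [negY, hW, E₂mod]; try ring
  have hyP : (1 : ZMod p) ≠ W.negY 0 1 := by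
    rw [hnegP]; intro h; apply h3; linear_combination h
  -- slope for doubling P
  have hden : (1 : ZMod p) - W.negY 0 1 = 3 := by rw [hnegP]; ring
  have hslope : W.slope 0 0 1 1 = -2 := by
    rw [slope_of_Y_ne rfl hyP, hden]
    rw [div_eq_iff h3]
    simp [hW, E₂mod]; ring
  have hxadd : W.addX 0 0 (W.slope 0 0 1 1) = 1 := by
    rw [hslope]; simp [addX, hW, E₂mod]; ring
  have hyadd : W.addY 0 0 1 (W.slope 0 0 1 1) = -1 := by
    rw [hslope]; simp [addY, negAddY, addX, negY, hW, E₂mod]; ring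
  -- the points
  set a : W.Point := Point.some _ _ hP with haP
  set b : W.Point := Point.some _ _ hT with hbT
  have h2aQ : 2 • a = Point.some _ _ hQ := by
    rw [two_nsmul, haP, add_self_of_Y_ne hyP]
    exact some_eq_some' _ _ hxadd hyadd
  have ha4 : 4 • a = 0 := by
    rw [show (4:ℕ) = 2 * 2 by norm_num, mul_nsmul, h2aQ, two_nsmul]
    exact add_self_of_Y_eq (by rw [hnegQ])
  have hb2 : 2 • b = 0 := by
    rw [two_nsmul, hbT]
    exact add_self_of_Y_eq (by rw [hnegT])
  have h2a0 : 2 • a ≠ 0 := by rw [h2aQ]; exact some_ne_zero hQ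
  have hb0 : b ≠ 0 := some_ne_zero hT
  have hab : a ≠ b := by
    rw [haP, hbT]; intro h
    injection h with hx hy
    apply h3; linear_combination hx
  have h2ab : 2 • a + b ≠ 0 := by
    rw [h2aQ, hbT]
    have hx : (1 : ZMod p) ≠ (-3 : ZMod p) := by
      intro h; apply h4; linear_combination h
    rw [add_of_X_ne hx]
    exact some_ne_zero _
  exact key_lemma a b ha4 hb2 h2a0 hb0 hab h2ab
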